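/- Let Ω ⊆ ℂ be open, let û : Ω → ℝ and α : Ω → ℂ be smooth, and let λ ∈ ℂ with |λ| = 1. Define U(μ) := [[û_z/4, −(√2/2)μ⁻¹e^{û/2}], [(√2/2)μ⁻¹αe^{−û/2}, −û_z/4]] and V(μ) := [[−û_z̄/4, −(√2/2)μ·ᾱ·e^{−û/2}], [(√2/2)μe^{û/2}, û_z̄/4]] for μ ∈ {λ, −iλ}. Let F, G : Ω → GL(2, ℂ) be smooth with F_z = F·U(λ), F_z̄ = F·V(λ), G_z = G·U(−iλ), G_z̄ = G·V(−iλ), and set φ := Fσ₃F⁻¹ and ψ := Gσ₃G⁻¹ with σ₃ = diag(1, −1). Then on Ω: tr(φ_z·φ_z) = 4λ⁻²α and tr(ψ_z·ψ_z) = −4λ⁻²α, so that tr(φ_z·φ_z) + tr(ψ_z·ψ_z) = 0; moreover, if F(w) and G(w) are unitary matrices for every w ∈ Ω, then (1/2)·tr(φ_z·(φ_z)*) = (1/2)·tr(ψ_z·(ψ_z)*) = e^û + |α|² e^{−û}, where * denotes conjugate transpose. -/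

import Mathlib

open Complex ComplexConjugate Matrix

/-- Wirtinger derivative `g_z = (∂ₓg - i ∂_y g)/2`. -/
noncomputable def wderivZ (g : ℂ → ℂ) (w : ℂ) : ℂ :=
  (fderiv ℝ g w 1 - Complex.I * fderiv ℝ g w Complex.I) / 2

/-- Wirtinger derivative `g_z̄ = (∂ₓg + i ∂_y g)/2`. -/
noncomputable def wderivZbar (g : ℂ → ℂ) (w : ℂ) : ℂ :=
  (fderiv ℝ g w 1 + Complex.I * fderiv ℝ g w Complex.I) / 2

/-- Entrywise Wirtinger derivative `g_z` on matrix-valued maps. -/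
noncomputable def mderivZ (g : ℂ → Matrix (Fin 2) (Fin 2) ℂ) (w : ℂ) :
    Matrix (Fin 2) (Fin 2) ℂ :=
  Matrix.of fun i j => wderivZ (fun z => g z i j) w

/-- Entrywise Wirtinger derivative `g_z̄` on matrix-valued maps. -/
noncomputable def mderivZbar (g : ℂ → Matrix (Fin 2) (Fin 2) ℂ) (w : ℂ) :
    Matrix (Fin 2) (Fin 2) ℂ :=
  Matrix.of fun i j => wderivZbar (fun z => g z i j) w

/-- The Pauli matrix `σ₃ = diag(1, −1)`. -/
def sigma3 : Matrix (Fin 2) (Fin 2) ℂ := !![1, 0; 0, -1]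

/-- The coefficient `U(μ)` of the Maurer–Cartan form. -/
noncomputable def Umat (uh : ℂ → ℝ) (α : ℂ → ℂ) (μ : ℂ) (w : ℂ) :
    Matrix (Fin 2) (Fin 2) ℂ :=
  !![wderivZ (fun z => (uh z : ℂ)) w / 4,
      -((Real.sqrt 2 : ℂ) / 2) * μ⁻¹ * (Real.exp (uh w / 2) : ℂ);
     ((Real.sqrt 2 : ℂ) / 2) * μ⁻¹ * α w * (Real.exp (-(uh w) / 2) : ℂ),
      -(wderivZ (fun z => (uh z : ℂ)) w) / 4]

/-- The coefficient `V(μ)` of the Maurer–Cartan form. -/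
noncomputable def Vmat (uh : ℂ → ℝ) (α : ℂ → ℂ) (μ : ℂ) (w : ℂ) :
    Matrix (Fin 2) (Fin 2) ℂ :=
  !![-(wderivZbar (fun z => (uh z : ℂ)) w) / 4,
      -((Real.sqrt 2 : ℂ) / 2) * μ * conj (α w) * (Real.exp (-(uh w) / 2) : ℂ);
     ((Real.sqrt 2 : ℂ) / 2) * μ * (Real.exp (uh w / 2) : ℂ),
      wderivZbar (fun z => (uh z : ℂ)) w / 4]

lemma wderivZ_congr {f g : ℂ → ℂ} {w : ℂ} (h : f =ᶠ[nhds w] g) :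
    wderivZ f w = wderivZ g w := by
  unfold wderivZ; rw [h.fderiv_eq]

lemma wderivZ_const (c w : ℂ) : wderivZ (fun _ => c) w = 0 := by
  unfold wderivZ; simp

lemma wderivZ_add {f g : ℂ → ℂ} {w : ℂ} (hf : DifferentiableAt ℝ f w)
    (hg : DifferentiableAt ℝ g w) :
    wderivZ (fun z => f z + g z) w = wderivZ f w + wderivZ g w := by
  unfold wderivZ; rw [fderiv_fun_add hf hg]; simp; ring

lemma wderivZ_mul {f g : ℂ → ℂ} {w : ℂ} (hf : DifferentiableAt ℝ f w)
    (hg : DifferentiableAt ℝ g w) :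
    wderivZ (fun z => f z * g z) w = wderivZ f w * g w + f w * wderivZ g w := by
  unfold wderivZ; rw [fderiv_fun_mul hf hg]; simp [smul_eq_mul]; ring

lemma mderivZ_congr {A B : ℂ → Matrix (Fin 2) (Fin 2) ℂ} {w : ℂ}
    (h : ∀ᶠ z in nhds w, A z = B z) : mderivZ A w = mderivZ B w := by
  ext i j
  exact wderivZ_congr (h.mono fun z hz => by simp only [hz])

lemma mderivZ_const (C : Matrix (Fin 2) (Fin 2) ℂ) (w : ℂ) :
    mderivZ (fun _ => C) w = 0 := by
  ext i j; exact wderivZ_const _ _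

lemma mderivZ_mul {A B : ℂ → Matrix (Fin 2) (Fin 2) ℂ} {w : ℂ}
    (hA : ∀ i j, DifferentiableAt ℝ (fun z => A z i j) w)
    (hB : ∀ i j, DifferentiableAt ℝ (fun z => B z i j) w) :
    mderivZ (fun z => A z * B z) w = mderivZ A w * B w + A w * mderivZ B w := by
  ext i j
  have : (fun z => (A z * B z) i j)
      = fun z => A z i 0 * B z 0 j + A z i 1 * B z 1 j := by
    funext z; simp [Matrix.mul_apply, Fin.sum_univ_two]
  simp only [mderivZ, Matrix.of_apply, this, Matrix.add_apply, Matrix.mul_apply,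
    Fin.sum_univ_two]
  rw [wderivZ_add (f := fun z => A z i 0 * B z 0 j) (g := fun z => A z i 1 * B z 1 j) ((hA i 0).mul (hB 0 j)) ((hA i 1).mul (hB 1 j)),
    wderivZ_mul (hA i 0) (hB 0 j), wderivZ_mul (hA i 1) (hB 1 j)]
  ring

lemma inv_entries_diff {Ω : Set ℂ} (hΩ : IsOpen Ω)
    {F : ℂ → Matrix (Fin 2) (Fin 2) ℂ}
    (hFd : ∀ i j, ∀ w ∈ Ω, DifferentiableAt ℝ (fun z => F z i j) w)
    (hFinv : ∀ w ∈ Ω, IsUnit (F w)) {w : ℂ} (hw : w ∈ Ω) :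
    ∀ i j, DifferentiableAt ℝ (fun z => (F z)⁻¹ i j) w := by
  have hdet : DifferentiableAt ℝ (fun z => (F z).det) w := by
    have : (fun z => (F z).det) = fun z => F z 0 0 * F z 1 1 - F z 0 1 * F z 1 0 := by
      funext z; rw [Matrix.det_fin_two]
    rw [this]
    exact (((hFd 0 0 w hw).mul (hFd 1 1 w hw)).sub ((hFd 0 1 w hw).mul (hFd 1 0 w hw)))
  have hne : (F w).det ≠ 0 := by
    have := (Matrix.isUnit_iff_isUnit_det _).mp (hFinv w hw)
    exact this.ne_zero
  have hdi : DifferentiableAt ℝ (fun z => ((F z).det)⁻¹) w := hdet.inv hne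
  intro i j
  have hadj : DifferentiableAt ℝ (fun z => (F z).adjugate i j) w := by
    fin_cases i <;> fin_cases j <;>
      simp only [Matrix.adjugate_fin_two, Matrix.cons_val', Matrix.cons_val_zero,
        Matrix.cons_val_one, Matrix.head_cons, Matrix.empty_val',
        Matrix.cons_val_fin_one, Matrix.head_fin_const]
    · exact hFd 1 1 w hw
    · exact (hFd 0 1 w hw).neg
    · exact (hFd 1 0 w hw).neg
    · exact hFd 0 0 w hw
  have heq : (fun z => (F z)⁻¹ i j) = fun z => ((F z).det)⁻¹ * (F z).adjugate i j := by
    funext z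
    rw [Matrix.inv_def, Matrix.smul_apply, Ring.inverse_eq_inv', smul_eq_mul]
  rw [heq]
  exact hdi.mul hadj

lemma phi_z_eq {Ω : Set ℂ} (hΩ : IsOpen Ω)
    {F : ℂ → Matrix (Fin 2) (Fin 2) ℂ} {U : Matrix (Fin 2) (Fin 2) ℂ}
    (hFd : ∀ i j, ∀ w ∈ Ω, DifferentiableAt ℝ (fun z => F z i j) w)
    (hFinv : ∀ w ∈ Ω, IsUnit (F w)) {w : ℂ} (hw : w ∈ Ω)
    (hFz : mderivZ F w = F w * U) :
    mderivZ (fun z => F z * sigma3 * (F z)⁻¹) w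
      = F w * (U * sigma3 - sigma3 * U) * (F w)⁻¹ := by
  have hFdw : ∀ i j, DifferentiableAt ℝ (fun z => F z i j) w := fun i j => hFd i j w hw
  have hId : ∀ i j, DifferentiableAt ℝ (fun z => (F z)⁻¹ i j) w :=
    inv_entries_diff hΩ hFd hFinv hw
  have hFs : ∀ i j, DifferentiableAt ℝ (fun z => (F z * sigma3) i j) w := by
    intro i j
    have : (fun z => (F z * sigma3) i j)
        = fun z => F z i 0 * sigma3 0 j + F z i 1 * sigma3 1 j := by
      funext z; simp [Matrix.mul_apply, Fin.sum_univ_two]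
    rw [this]
    exact ((hFdw i 0).mul_const _).add ((hFdw i 1).mul_const _)
  have hdetU : IsUnit (F w).det := (Matrix.isUnit_iff_isUnit_det _).mp (hFinv w hw)
  have hFsig : mderivZ (fun z => F z * sigma3) w = mderivZ F w * sigma3 := by
    have := mderivZ_mul (B := fun _ => sigma3) hFdw (fun i j => differentiableAt_const _)
    rw [this, mderivZ_const]; simp
  have hinv : mderivZ (fun z => (F z)⁻¹) w = -((F w)⁻¹ * mderivZ F w * (F w)⁻¹) := by
    have h0 : mderivZ (fun z => F z * (F z)⁻¹) w = 0 := by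
      have hev : ∀ᶠ z in nhds w, F z * (F z)⁻¹ = (1 : Matrix (Fin 2) (Fin 2) ℂ) := by
        filter_upwards [hΩ.mem_nhds hw] with z hz
        exact Matrix.mul_nonsing_inv _ ((Matrix.isUnit_iff_isUnit_det _).mp (hFinv z hz))
      rw [mderivZ_congr hev, mderivZ_const]
    rw [mderivZ_mul hFdw hId] at h0
    have h1 : F w * mderivZ (fun z => (F z)⁻¹) w = -(mderivZ F w * (F w)⁻¹) := by
      linear_combination (norm := noncomm_ring) h0
    have := congrArg (fun M => (F w)⁻¹ * M) h1
    simpa [Matrix.nonsing_inv_mul_cancel_left _ _ hdetU, Matrix.mul_assoc, mul_neg] using this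
  rw [mderivZ_mul hFs hId, hFsig, hinv, hFz]
  have hcan : (F w)⁻¹ * (F w * U) = U := Matrix.nonsing_inv_mul_cancel_left _ _ hdetU
  calc F w * U * sigma3 * (F w)⁻¹ + F w * sigma3 * -((F w)⁻¹ * (F w * U) * (F w)⁻¹)
      = F w * U * sigma3 * (F w)⁻¹ + F w * sigma3 * -(U * (F w)⁻¹) := by rw [hcan]
    _ = F w * (U * sigma3 - sigma3 * U) * (F w)⁻¹ := by noncomm_ring

lemma trace_conj_sq {F C : Matrix (Fin 2) (Fin 2) ℂ} (h : IsUnit F) :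
    Matrix.trace ((F * C * F⁻¹) * (F * C * F⁻¹)) = Matrix.trace (C * C) := by
  have hd : IsUnit F.det := (Matrix.isUnit_iff_isUnit_det _).mp h
  have : (F * C * F⁻¹) * (F * C * F⁻¹) = F * (C * C) * F⁻¹ := by
    calc (F * C * F⁻¹) * (F * C * F⁻¹) = F * C * (F⁻¹ * F) * C * F⁻¹ := by noncomm_ring
      _ = F * (C * C) * F⁻¹ := by rw [Matrix.nonsing_inv_mul _ hd]; noncomm_ring
  rw [this, Matrix.trace_mul_cycle, ← Matrix.mul_assoc, Matrix.nonsing_inv_mul _ hd, one_mul]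

lemma sqrt2_sq : (Real.sqrt 2 : ℂ) * (Real.sqrt 2 : ℂ) = 2 := by
  norm_cast
  rw [Real.mul_self_sqrt (by norm_num : (0:ℝ) ≤ 2)]

lemma exp_cancel (u : ℝ) :
    (Real.exp (u / 2) : ℂ) * (Real.exp (-u / 2) : ℂ) = 1 := by
  have h : u / 2 + -u / 2 = 0 := by ring
  rw [← Complex.ofReal_mul, ← Real.exp_add, h, Real.exp_zero, Complex.ofReal_one]

lemma traceCC (uh : ℂ → ℝ) (α : ℂ → ℂ) (μ : ℂ) (w : ℂ) :
    Matrix.trace ((Umat uh α μ w * sigma3 - sigma3 * Umat uh α μ w)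
      * (Umat uh α μ w * sigma3 - sigma3 * Umat uh α μ w)) = 4 * μ⁻¹ ^ 2 * α w := by
  simp [Umat, sigma3, Matrix.trace_fin_two, Matrix.mul_apply, Matrix.sub_apply,
    Fin.sum_univ_two]
  have h1 := sqrt2_sq
  have h2 : Complex.exp ((uh w : ℂ) / 2) * Complex.exp (-(uh w : ℂ) / 2) = 1 := by
    have h : (uh w : ℂ) / 2 + -(uh w : ℂ) / 2 = 0 := by ring
    rw [← Complex.exp_add, h, Complex.exp_zero]
  linear_combination (2 * μ⁻¹ ^ 2 * α w * Complex.exp ((uh w : ℂ) / 2) * Complex.exp (-(uh w : ℂ) / 2)) * h1 + (4 * μ⁻¹ ^ 2 * α w) * h2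

lemma Cmat_eq (uh : ℂ → ℝ) (α : ℂ → ℂ) (μ : ℂ) (w : ℂ) :
    Umat uh α μ w * sigma3 - sigma3 * Umat uh α μ w
      = !![0, (Real.sqrt 2 : ℂ) * μ⁻¹ * (Real.exp (uh w / 2) : ℂ);
           (Real.sqrt 2 : ℂ) * μ⁻¹ * α w * (Real.exp (-(uh w) / 2) : ℂ), 0] := by
  ext i j
  fin_cases i <;> fin_cases j <;>
    simp [Umat, sigma3, Matrix.mul_apply, Fin.sum_univ_two] <;> ring

lemma conjT_offdiag (b c : ℂ) :
    (!![0, b; c, 0] : Matrix (Fin 2) (Fin 2) ℂ)ᴴ = !![0, conj c; conj b, 0] := by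
  ext i j
  fin_cases i <;> fin_cases j <;> simp [Matrix.conjTranspose_apply]

lemma traceCCH (uh : ℂ → ℝ) (α : ℂ → ℂ) (μ : ℂ) (w : ℂ) (hμ : conj μ * μ = 1) :
    Matrix.trace ((Umat uh α μ w * sigma3 - sigma3 * Umat uh α μ w)
      * (Umat uh α μ w * sigma3 - sigma3 * Umat uh α μ w)ᴴ)
      = 2 * ((Real.exp (uh w) + ‖α w‖ ^ 2 * Real.exp (-(uh w)) : ℝ) : ℂ) := by
  have h1 := sqrt2_sq
  have hμ' : (conj μ)⁻¹ * μ⁻¹ = 1 := by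
    rw [← mul_inv, hμ, inv_one]
  have hexp1 : Complex.exp ((uh w : ℂ) / 2) * Complex.exp ((uh w : ℂ) / 2)
      = Complex.exp ((uh w : ℂ)) := by
    rw [← Complex.exp_add]; ring_nf
  have hexp2 : Complex.exp (-(uh w : ℂ) / 2) * Complex.exp (-(uh w : ℂ) / 2)
      = Complex.exp (-(uh w : ℂ)) := by
    rw [← Complex.exp_add]; ring_nf
  have hα : α w * conj (α w) = ((‖α w‖ : ℝ) : ℂ) ^ 2 := by
    rw [Complex.mul_conj, ← Complex.sq_norm, Complex.ofReal_pow]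
  have hc1 : conj (Complex.exp ((uh w : ℂ) / 2)) = Complex.exp ((uh w : ℂ) / 2) := by
    rw [← Complex.exp_conj]; simp [map_div₀, Complex.conj_ofReal, map_ofNat]
  have hc2 : conj (Complex.exp (-(uh w : ℂ) / 2)) = Complex.exp (-(uh w : ℂ) / 2) := by
    rw [← Complex.exp_conj]; simp [map_div₀, Complex.conj_ofReal, map_ofNat]
  rw [Cmat_eq, conjT_offdiag]
  simp [Matrix.trace_fin_two, Matrix.mul_apply, Fin.sum_univ_two, _root_.map_mul,
    map_inv₀, Complex.conj_ofReal, hc1, hc2, Complex.ofReal_pow]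
  linear_combination (((conj μ)⁻¹ * μ⁻¹) * Complex.exp ((uh w : ℂ) / 2) * Complex.exp ((uh w : ℂ) / 2)
      + ((conj μ)⁻¹ * μ⁻¹) * (α w * conj (α w)) * Complex.exp (-(uh w : ℂ) / 2) * Complex.exp (-(uh w : ℂ) / 2)) * h1
    + (2 * Complex.exp ((uh w : ℂ) / 2) * Complex.exp ((uh w : ℂ) / 2)
      + 2 * (α w * conj (α w)) * Complex.exp (-(uh w : ℂ) / 2) * Complex.exp (-(uh w : ℂ) / 2)) * hμ'
    + 2 * hexp1 + 2 * (α w * conj (α w)) * hexp2 + 2 * Complex.exp (-(uh w : ℂ)) * hα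

lemma trace_conj_herm {F C : Matrix (Fin 2) (Fin 2) ℂ} (h : Fᴴ * F = 1) :
    Matrix.trace ((F * C * Fᴴ) * (F * C * Fᴴ)ᴴ) = Matrix.trace (C * Cᴴ) := by
  have h2 : (F * C * Fᴴ)ᴴ = F * Cᴴ * Fᴴ := by
    simp [Matrix.conjTranspose_mul, Matrix.mul_assoc]
  rw [h2]
  have h3 : F * C * Fᴴ * (F * Cᴴ * Fᴴ) = F * (C * Cᴴ) * Fᴴ := by
    calc F * C * Fᴴ * (F * Cᴴ * Fᴴ) = F * C * (Fᴴ * F) * Cᴴ * Fᴴ := by noncomm_ring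
      _ = F * (C * Cᴴ) * Fᴴ := by rw [h]; noncomm_ring
  rw [h3, Matrix.trace_mul_cycle, ← Matrix.mul_assoc, h, one_mul]

theorem stmt12 (Ω : Set ℂ) (hΩ : IsOpen Ω)
    (uh : ℂ → ℝ) (α : ℂ → ℂ) (lam : ℂ)
    (huh : ContDiffOn ℝ (⊤ : ℕ∞) uh Ω)
    (hα : ContDiffOn ℝ (⊤ : ℕ∞) α Ω)
    (hlam : ‖lam‖ = 1)
    (F G : ℂ → Matrix (Fin 2) (Fin 2) ℂ)
    (hFsmooth : ∀ i j, ContDiffOn ℝ (⊤ : ℕ∞) (fun w => F w i j) Ω)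
    (hGsmooth : ∀ i j, ContDiffOn ℝ (⊤ : ℕ∞) (fun w => G w i j) Ω)
    (hFinv : ∀ w ∈ Ω, IsUnit (F w))
    (hGinv : ∀ w ∈ Ω, IsUnit (G w))
    (hFz : ∀ w ∈ Ω, mderivZ F w = F w * Umat uh α lam w)
    (hFzbar : ∀ w ∈ Ω, mderivZbar F w = F w * Vmat uh α lam w)
    (hGz : ∀ w ∈ Ω, mderivZ G w = G w * Umat uh α (-Complex.I * lam) w)
    (hGzbar : ∀ w ∈ Ω, mderivZbar G w = G w * Vmat uh α (-Complex.I * lam) w) :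
    (∀ w ∈ Ω,
      Matrix.trace (mderivZ (fun z => F z * sigma3 * (F z)⁻¹) w
          * mderivZ (fun z => F z * sigma3 * (F z)⁻¹) w) = 4 * lam⁻¹ ^ 2 * α w ∧
      Matrix.trace (mderivZ (fun z => G z * sigma3 * (G z)⁻¹) w
          * mderivZ (fun z => G z * sigma3 * (G z)⁻¹) w) = -(4 * lam⁻¹ ^ 2 * α w) ∧
      Matrix.trace (mderivZ (fun z => F z * sigma3 * (F z)⁻¹) w
          * mderivZ (fun z => F z * sigma3 * (F z)⁻¹) w)
        + Matrix.trace (mderivZ (fun z => G z * sigma3 * (G z)⁻¹) w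
          * mderivZ (fun z => G z * sigma3 * (G z)⁻¹) w) = 0) ∧
    ((∀ w ∈ Ω, (F w)ᴴ * F w = 1 ∧ (G w)ᴴ * G w = 1) →
      ∀ w ∈ Ω,
        (1 / 2 : ℂ) * Matrix.trace (mderivZ (fun z => F z * sigma3 * (F z)⁻¹) w
            * (mderivZ (fun z => F z * sigma3 * (F z)⁻¹) w)ᴴ)
          = ((Real.exp (uh w) + ‖α w‖ ^ 2 * Real.exp (-(uh w)) : ℝ) : ℂ) ∧
        (1 / 2 : ℂ) * Matrix.trace (mderivZ (fun z => G z * sigma3 * (G z)⁻¹) w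
            * (mderivZ (fun z => G z * sigma3 * (G z)⁻¹) w)ᴴ)
          = ((Real.exp (uh w) + ‖α w‖ ^ 2 * Real.exp (-(uh w)) : ℝ) : ℂ)) := by
  have hFd : ∀ i j, ∀ w ∈ Ω, DifferentiableAt ℝ (fun z => F z i j) w := fun i j w hw =>
    ((hFsmooth i j).contDiffAt (hΩ.mem_nhds hw)).differentiableAt (by norm_num)
  have hGd : ∀ i j, ∀ w ∈ Ω, DifferentiableAt ℝ (fun z => G z i j) w := fun i j w hw =>
    ((hGsmooth i j).contDiffAt (hΩ.mem_nhds hw)).differentiableAt (by norm_num)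
  have hμ1 : conj lam * lam = 1 := by
    rw [mul_comm, Complex.mul_conj, Complex.normSq_eq_norm_sq, hlam]; norm_num
  have hμ2 : conj (-Complex.I * lam) * (-Complex.I * lam) = 1 := by
    simp only [_root_.map_mul, map_neg, Complex.conj_I]
    linear_combination hμ1 - conj lam * lam * Complex.I_mul_I
  have hinv2 : ((-Complex.I * lam)⁻¹) ^ 2 = -(lam⁻¹ ^ 2) := by
    rw [mul_inv, mul_pow, inv_neg, Complex.inv_I, neg_neg, Complex.I_sq]; ring
  constructor
  · intro w hw
    have hφ := phi_z_eq hΩ hFd hFinv hw (hFz w hw)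
    have hψ := phi_z_eq hΩ hGd hGinv hw (hGz w hw)
    have tF : Matrix.trace (mderivZ (fun z => F z * sigma3 * (F z)⁻¹) w
        * mderivZ (fun z => F z * sigma3 * (F z)⁻¹) w) = 4 * lam⁻¹ ^ 2 * α w := by
      rw [hφ, trace_conj_sq (hFinv w hw), traceCC]
    have tG : Matrix.trace (mderivZ (fun z => G z * sigma3 * (G z)⁻¹) w
        * mderivZ (fun z => G z * sigma3 * (G z)⁻¹) w) = -(4 * lam⁻¹ ^ 2 * α w) := by
      rw [hψ, trace_conj_sq (hGinv w hw), traceCC, hinv2]; ring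
    exact ⟨tF, tG, by rw [tF, tG]; ring⟩
  · intro hU w hw
    have hFu := (hU w hw).1
    have hGu := (hU w hw).2
    have hFinvH : (F w)⁻¹ = (F w)ᴴ := Matrix.inv_eq_left_inv hFu
    have hGinvH : (G w)⁻¹ = (G w)ᴴ := Matrix.inv_eq_left_inv hGu
    have hφ := phi_z_eq hΩ hFd hFinv hw (hFz w hw)
    have hψ := phi_z_eq hΩ hGd hGinv hw (hGz w hw)
    rw [hFinvH] at hφ
    rw [hGinvH] at hψ
    constructor
    · rw [hφ, trace_conj_herm hFu, traceCCH uh α lam w hμ1]; ring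
    · rw [hψ, trace_conj_herm hGu, traceCCH uh α (-Complex.I * lam) w hμ2]; ring
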